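/- If A and B are n×n diagonally symmetrizable irreducible nonnegative matrices that commute, then they can be simultaneously decomposed as A = D_v^{1/2} D_u^{-1/2} K Λ_A Kᵀ D_v^{-1/2} D_u^{1/2} and B = D_v^{1/2} D_u^{-1/2} K Λ_B Kᵀ D_v^{-1/2} D_u^{1/2}, where v and u are the common right and left Perron vectors of A and B, K is orthogonal with first column equal to D_v^{1/2} D_u^{1/2} e (e the all-ones vector), and Λ_A, Λ_B are diagonal matrices of the eigenvalues of A and B. -/

import Mathlib

open Matrix Polynomial

noncomputable def specRad {ι : Type*} [Fintype ι] [DecidableEq ι]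
    (A : Matrix ι ι ℝ) : ℝ :=
  sSup (abs '' spectrum ℝ A)

def IsIrred {n : ℕ} (A : Matrix (Fin n) (Fin n) ℝ) : Prop :=
  ∀ i j, ∃ t : ℕ, 0 < (A ^ (t + 1)) i j

def Symmetrizable {n : ℕ} (A : Matrix (Fin n) (Fin n) ℝ) : Prop :=
  ∃ (dL dR : Fin n → ℝ) (S : Matrix (Fin n) (Fin n) ℝ),
    (∀ i, 0 < dL i) ∧ (∀ i, 0 < dR i) ∧ S.IsSymm ∧
      A = Matrix.diagonal dL * S * Matrix.diagonal dR

variable {n : ℕ}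

lemma algebraMap_matrix_eq (μ : ℝ) :
    algebraMap ℝ (Matrix (Fin n) (Fin n) ℝ) μ = μ • (1 : Matrix (Fin n) (Fin n) ℝ) := by
  simp [Algebra.algebraMap_eq_smul_one]

lemma mem_spectrum_of_eigen {M : Matrix (Fin n) (Fin n) ℝ} {μ : ℝ} {x : Fin n → ℝ}
    (hx : x ≠ 0) (h : M.mulVec x = μ • x) : μ ∈ spectrum ℝ M := by
  rw [spectrum.mem_iff]
  intro hu
  rw [Matrix.isUnit_iff_isUnit_det, isUnit_iff_ne_zero] at hu
  apply hu
  rw [← Matrix.exists_mulVec_eq_zero_iff]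
  refine ⟨x, hx, ?_⟩
  rw [algebraMap_matrix_eq, Matrix.sub_mulVec, Matrix.smul_mulVec, Matrix.one_mulVec, h,
    sub_self]

lemma det_smul_one_sub_eq_prod {M : Matrix (Fin n) (Fin n) ℝ} (hM : M.IsHermitian) (μ : ℝ) :
    (μ • (1 : Matrix (Fin n) (Fin n) ℝ) - M).det = ∏ i, (μ - hM.eigenvalues i) := by
  set U : Matrix (Fin n) (Fin n) ℝ := (hM.eigenvectorUnitary : Matrix (Fin n) (Fin n) ℝ) with hU
  have hU1 : U * star U = 1 := Matrix.mem_unitaryGroup_iff.mp hM.eigenvectorUnitary.2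
  have key : μ • (1 : Matrix (Fin n) (Fin n) ℝ) - M
      = U * (Matrix.diagonal (fun i => μ - hM.eigenvalues i)) * star U := by
    have h1 : μ • (1 : Matrix (Fin n) (Fin n) ℝ) = U * (μ • (1 : Matrix (Fin n) (Fin n) ℝ)) * star U := by
      rw [Matrix.mul_smul, Matrix.mul_one, Matrix.smul_mul, hU1]
    conv_lhs => rw [h1, hM.spectral_theorem, Unitary.conjStarAlgAut_apply, ← hU]
    rw [← Matrix.sub_mul, ← Matrix.mul_sub]
    congr 1
    congr 1
    ext i j
    by_cases hij : i = j <;>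
      simp [Matrix.diagonal, hij, Matrix.one_apply, Function.comp]
  rw [key, Matrix.det_mul, Matrix.det_mul]
  have h2 : U.det * (star U).det = 1 := by rw [← Matrix.det_mul, hU1, Matrix.det_one]
  calc U.det * (Matrix.diagonal (fun i => μ - hM.eigenvalues i)).det * (star U).det
      = (U.det * (star U).det) * (Matrix.diagonal (fun i => μ - hM.eigenvalues i)).det := by ring
    _ = ∏ i, (μ - hM.eigenvalues i) := by rw [h2, one_mul, Matrix.det_diagonal]

lemma spectrum_eq_range {M : Matrix (Fin n) (Fin n) ℝ} (hM : M.IsHermitian) :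
    spectrum ℝ M = Set.range hM.eigenvalues := by
  ext μ
  constructor
  · intro h
    rw [spectrum.mem_iff] at h
    by_contra hc
    apply h
    rw [Matrix.isUnit_iff_isUnit_det, isUnit_iff_ne_zero, algebraMap_matrix_eq,
      det_smul_one_sub_eq_prod hM]
    rw [Finset.prod_ne_zero_iff]
    intro i _
    rw [sub_ne_zero]
    exact fun he => hc ⟨i, he.symm⟩
  · rintro ⟨i, rfl⟩
    exact hM.eigenvalues_mem_spectrum_real i

lemma posSemidef_smul_one_sub {M : Matrix (Fin n) (Fin n) ℝ} (hM : M.IsHermitian) {r : ℝ}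
    (hr : ∀ i, hM.eigenvalues i ≤ r) :
    (r • (1 : Matrix (Fin n) (Fin n) ℝ) - M).PosSemidef := by
  set U : Matrix (Fin n) (Fin n) ℝ := (hM.eigenvectorUnitary : Matrix (Fin n) (Fin n) ℝ) with hU
  have hU1 : U * star U = 1 := Matrix.mem_unitaryGroup_iff.mp hM.eigenvectorUnitary.2
  have key : r • (1 : Matrix (Fin n) (Fin n) ℝ) - M
      = U * (Matrix.diagonal (fun i => r - hM.eigenvalues i)) * Uᴴ := by
    rw [← Matrix.star_eq_conjTranspose]
    have h1 : r • (1 : Matrix (Fin n) (Fin n) ℝ) = U * (r • (1 : Matrix (Fin n) (Fin n) ℝ)) * star U := by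
      rw [Matrix.mul_smul, Matrix.mul_one, Matrix.smul_mul, hU1]
    conv_lhs => rw [h1, hM.spectral_theorem, Unitary.conjStarAlgAut_apply, ← hU]
    rw [← Matrix.sub_mul, ← Matrix.mul_sub]
    congr 1
    congr 1
    ext i j
    by_cases hij : i = j <;>
      simp [Matrix.diagonal, hij, Matrix.one_apply, Function.comp]
  rw [key]
  refine Matrix.PosSemidef.mul_mul_conjTranspose_same ?_ U
  rw [Matrix.posSemidef_diagonal_iff]
  intro i
  simp [sub_nonneg, hr i]

lemma rayleigh_le {M : Matrix (Fin n) (Fin n) ℝ} (hM : M.IsHermitian) {r : ℝ}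
    (hr : ∀ i, hM.eigenvalues i ≤ r) (x : Fin n → ℝ) :
    x ⬝ᵥ M *ᵥ x ≤ r * (x ⬝ᵥ x) := by
  have h := (posSemidef_smul_one_sub hM hr).re_dotProduct_nonneg x
  simp only [RCLike.re_to_real, star_trivial] at h
  rw [Matrix.sub_mulVec, Matrix.smul_mulVec, Matrix.one_mulVec, dotProduct_sub,
    dotProduct_smul] at h
  simp only [smul_eq_mul] at h
  linarith

lemma rayleigh_eq {M : Matrix (Fin n) (Fin n) ℝ} (hM : M.IsHermitian) {r : ℝ}
    (hr : ∀ i, hM.eigenvalues i ≤ r) (x : Fin n → ℝ)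
    (hx : x ⬝ᵥ M *ᵥ x = r * (x ⬝ᵥ x)) : M *ᵥ x = r • x := by
  have h := ((posSemidef_smul_one_sub hM hr).dotProduct_mulVec_zero_iff x).mp ?_
  · rw [Matrix.sub_mulVec, Matrix.smul_mulVec, Matrix.one_mulVec, sub_eq_zero] at h
    exact h.symm
  · simp only [star_trivial]
    rw [Matrix.sub_mulVec, Matrix.smul_mulVec, Matrix.one_mulVec, dotProduct_sub,
      dotProduct_smul, hx]
    simp

lemma pow_mulVec_eigen {C : Matrix (Fin n) (Fin n) ℝ} {x : Fin n → ℝ} {ν : ℝ}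
    (h : C *ᵥ x = ν • x) : ∀ k, (C ^ k) *ᵥ x = ν ^ k • x
  | 0 => by simp
  | k + 1 => by
    rw [pow_succ, ← Matrix.mulVec_mulVec, h, Matrix.mulVec_smul, pow_mulVec_eigen h k,
      pow_succ, smul_smul, mul_comm]

lemma aeval_mulVec_eigen {C : Matrix (Fin n) (Fin n) ℝ} {x : Fin n → ℝ} {ν : ℝ}
    (h : C *ᵥ x = ν • x) (p : ℝ[X]) : (Polynomial.aeval C p) *ᵥ x = p.eval ν • x := by
  induction p using Polynomial.induction_on' with
  | add p q hp hq => rw [map_add, Matrix.add_mulVec, hp, hq, eval_add, add_smul]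
  | monomial k a =>
    rw [aeval_monomial, algebraMap_matrix_eq, smul_mul_assoc, one_mul,
      Matrix.smul_mulVec, pow_mulVec_eigen h, eval_monomial, smul_smul]

lemma dot_expand (M : Matrix (Fin n) (Fin n) ℝ) (u v : Fin n → ℝ) :
    u ⬝ᵥ M *ᵥ v = ∑ i, ∑ j, u i * (M i j * v j) := by
  simp [dotProduct, Matrix.mulVec, Finset.mul_sum]

lemma abs_dot_le {M : Matrix (Fin n) (Fin n) ℝ} (h0 : ∀ i j, 0 ≤ M i j) (x : Fin n → ℝ) :
    |x ⬝ᵥ M *ᵥ x| ≤ (fun i => |x i|) ⬝ᵥ M *ᵥ (fun i => |x i|) := by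
  rw [dot_expand, dot_expand]
  refine (Finset.abs_sum_le_sum_abs _ _).trans ?_
  refine Finset.sum_le_sum fun i _ => ?_
  refine (Finset.abs_sum_le_sum_abs _ _).trans ?_
  refine Finset.sum_le_sum fun j _ => ?_
  rw [abs_mul, abs_mul, abs_of_nonneg (h0 i j)]

lemma perron_sym (hn : 0 < n) (M : Matrix (Fin n) (Fin n) ℝ)
    (hM : M.IsHermitian) (h0 : ∀ i j, 0 ≤ M i j) (hirr : IsIrred M) :
    ∃ (r : ℝ) (w : Fin n → ℝ),
      0 < r ∧ (∀ i, 0 < w i) ∧ (∑ i, w i ^ 2) = 1 ∧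
      M.mulVec w = r • w ∧ specRad M = r ∧
      (∀ z : Fin n → ℝ, M.mulVec z = r • z → ∃ c : ℝ, z = c • w) := by
  haveI : Nonempty (Fin n) := ⟨⟨0, hn⟩⟩
  obtain ⟨i₀, -, hmax⟩ := Finset.exists_max_image Finset.univ hM.eigenvalues
    ⟨⟨0, hn⟩, Finset.mem_univ _⟩
  set r := hM.eigenvalues i₀ with hrdef
  have hr : ∀ i, hM.eigenvalues i ≤ r := fun i => hmax i (Finset.mem_univ i)
  -- nonneg powers
  have hpow0 : ∀ (k : ℕ) i j, 0 ≤ (M ^ k) i j := by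
    intro k
    induction k with
    | zero => intro i j; by_cases h : i = j <;> simp [Matrix.one_apply, h]
    | succ k ih =>
      intro i j
      rw [pow_succ, Matrix.mul_apply]
      exact Finset.sum_nonneg fun l _ => mul_nonneg (ih i l) (h0 l j)
  -- r nonneg
  have hr0 : 0 ≤ r := by
    have h1 := rayleigh_le hM hr (Pi.single ⟨0, hn⟩ 1)
    have h2 : (Pi.single (⟨0, hn⟩ : Fin n) (1:ℝ)) ⬝ᵥ (Pi.single (⟨0, hn⟩ : Fin n) (1:ℝ)) = 1 := by
      simp
    have h3 : (Pi.single (⟨0, hn⟩ : Fin n) (1:ℝ)) ⬝ᵥ M *ᵥ (Pi.single (⟨0, hn⟩ : Fin n) (1:ℝ))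
        = M ⟨0, hn⟩ ⟨0, hn⟩ := by
      simp [Matrix.mulVec_single]
    rw [h2, h3, mul_one] at h1
    exact le_trans (h0 _ _) h1
  -- positivity propagation
  have posof : ∀ z : Fin n → ℝ, M.mulVec z = r • z → (∀ i, 0 ≤ z i) →
      ∀ j, 0 < z j → 0 < r ∧ ∀ i, 0 < z i := by
    intro z hz hz0 j hj
    have step : ∀ (t : ℕ) (a b : Fin n), 0 < (M ^ (t+1)) a b → 0 < z b →
        0 < r ^ (t+1) * z a := by
      intro t a b hab hb
      have h1 : (M ^ (t+1)) *ᵥ z = r ^ (t+1) • z := pow_mulVec_eigen hz _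
      have h2 : r ^ (t+1) * z a = ∑ k, (M ^ (t+1)) a k * z k := by
        have := congrFun h1 a
        simpa [Matrix.mulVec, dotProduct] using this.symm
      rw [h2]
      have h3 : (M ^ (t+1)) a b * z b ≤ ∑ k, (M ^ (t+1)) a k * z k :=
        Finset.single_le_sum (f := fun k => (M ^ (t+1)) a k * z k)
          (fun k _ => mul_nonneg (hpow0 _ a k) (hz0 k)) (Finset.mem_univ b)
      exact lt_of_lt_of_le (mul_pos hab hb) h3
    obtain ⟨t, ht⟩ := hirr j j
    have hrpos : 0 < r := by
      rcases hr0.lt_or_eq with h | h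
      · exact h
      · exfalso
        have h2 := step t j j ht hj
        rw [← h] at h2
        simp at h2
    refine ⟨hrpos, fun i => ?_⟩
    obtain ⟨t', ht'⟩ := hirr i j
    have h3 := step t' i j ht' hj
    have h4 : (0:ℝ) < r ^ (t'+1) := pow_pos hrpos _
    by_contra hcon
    push_neg at hcon
    nlinarith
  -- the eigenvector
  set x : Fin n → ℝ := ⇑(hM.eigenvectorBasis i₀) with hxdef
  have hx : M *ᵥ x = r • x := hM.mulVec_eigenvectorBasis i₀
  have hxnorm : x ⬝ᵥ x = 1 := by
    have h1 := (orthonormal_iff_ite.mp hM.eigenvectorBasis.orthonormal) i₀ i₀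
    simp only [if_pos rfl, if_true, eq_self_iff_true] at h1
    rw [← h1]
    simp only [PiLp.inner_apply, RCLike.inner_apply, conj_trivial, dotProduct]
    rfl
  set y : Fin n → ℝ := fun i => |x i| with hydef
  have hyy : y ⬝ᵥ y = x ⬝ᵥ x := by
    simp [dotProduct, hydef, abs_mul_abs_self]
  have eigdot : ∀ z : Fin n → ℝ, M *ᵥ z = r • z → z ⬝ᵥ M *ᵥ z = r * (z ⬝ᵥ z) := by
    intro z hz
    rw [hz, dotProduct_smul, smul_eq_mul]
  -- |z| is an eigenvector whenever z is
  have abs_eig : ∀ z : Fin n → ℝ, M *ᵥ z = r • z → M *ᵥ (fun i => |z i|) = r • (fun i => |z i|) := by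
    intro z hz
    set za : Fin n → ℝ := fun i => |z i| with hzadef
    have hzaza : za ⬝ᵥ za = z ⬝ᵥ z := by simp [dotProduct, hzadef, abs_mul_abs_self]
    have h1 : r * (za ⬝ᵥ za) ≤ za ⬝ᵥ M *ᵥ za := by
      rw [hzaza, ← eigdot z hz]
      exact le_trans (le_abs_self _) (abs_dot_le h0 z)
    have h2 := rayleigh_le hM hr za
    exact rayleigh_eq hM hr za (le_antisymm h2 h1)
  have hy : M *ᵥ y = r • y := abs_eig x hx
  have hy0 : ∀ i, 0 ≤ y i := fun i => abs_nonneg _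
  obtain ⟨j₀, hj₀⟩ : ∃ j, 0 < y j := by
    by_contra hcon
    push_neg at hcon
    have : ∀ i, x i = 0 := fun i => abs_eq_zero.mp (le_antisymm (hcon i) (abs_nonneg _))
    rw [dotProduct] at hxnorm
    simp [this] at hxnorm
  obtain ⟨hrpos, hypos⟩ := posof y hy hy0 j₀ hj₀
  -- specRad
  have habs : ∀ i, |hM.eigenvalues i| ≤ r := by
    intro i
    rw [abs_le]
    refine ⟨?_, hr i⟩
    set xi : Fin n → ℝ := ⇑(hM.eigenvectorBasis i) with hxidef
    have hxi : M *ᵥ xi = hM.eigenvalues i • xi := hM.mulVec_eigenvectorBasis i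
    have hxinorm : xi ⬝ᵥ xi = 1 := by
      have h1 := (orthonormal_iff_ite.mp hM.eigenvectorBasis.orthonormal) i i
      simp only [if_pos rfl, if_true, eq_self_iff_true] at h1
      rw [← h1]
      simp only [PiLp.inner_apply, RCLike.inner_apply, conj_trivial, dotProduct]
      rfl
    have h1 : xi ⬝ᵥ M *ᵥ xi = hM.eigenvalues i := by
      rw [hxi, dotProduct_smul, smul_eq_mul, hxinorm, mul_one]
    set yi : Fin n → ℝ := fun k => |xi k| with hyidef
    have h2 : |xi ⬝ᵥ M *ᵥ xi| ≤ yi ⬝ᵥ M *ᵥ yi := abs_dot_le h0 xi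
    have h3 := rayleigh_le hM hr yi
    have h4 : yi ⬝ᵥ yi = 1 := by
      rw [← hxinorm]; simp [dotProduct, hyidef, abs_mul_abs_self]
    rw [h4, mul_one] at h3
    have h5 : |hM.eigenvalues i| ≤ r := by rw [← h1]; exact le_trans h2 h3
    linarith [abs_le.mp h5]
  have hspec : specRad M = r := by
    rw [specRad, spectrum_eq_range hM]
    apply IsGreatest.csSup_eq
    constructor
    · exact ⟨r, ⟨i₀, rfl⟩, abs_of_nonneg hr0⟩
    · rintro a ⟨μ, ⟨i, rfl⟩, rfl⟩
      exact habs i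
  -- simplicity
  have hsimple : ∀ z : Fin n → ℝ, M.mulVec z = r • z → ∃ c : ℝ, z = c • y := by
    intro z hz
    by_cases hz0 : z = 0
    · exact ⟨0, by simp [hz0]⟩
    set za : Fin n → ℝ := fun i => |z i| with hzadef
    have hza : M *ᵥ za = r • za := abs_eig z hz
    obtain ⟨j₁, hj₁⟩ := Function.ne_iff.mp hz0
    have hj₁' : 0 < za j₁ := abs_pos.mpr hj₁
    obtain ⟨-, hzapos⟩ := posof za hza (fun i => abs_nonneg _) j₁ hj₁'
    -- sign constancy
    have hsign : ∀ i j : Fin n, 0 < z i * z j := by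
      intro i j
      obtain ⟨t, ht⟩ := hirr i j
      set N := M ^ (t+1) with hNdef
      have hNz : N *ᵥ z = r ^ (t+1) • z := pow_mulVec_eigen hz _
      have hNza : N *ᵥ za = r ^ (t+1) • za := pow_mulVec_eigen hza _
      have e1 : z ⬝ᵥ N *ᵥ z = r ^ (t+1) * (z ⬝ᵥ z) := by
        rw [hNz, dotProduct_smul, smul_eq_mul]
      have e2 : za ⬝ᵥ N *ᵥ za = r ^ (t+1) * (z ⬝ᵥ z) := by
        rw [hNza, dotProduct_smul, smul_eq_mul]
        congr 1
        simp [dotProduct, hzadef, abs_mul_abs_self]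
      have hsum : z ⬝ᵥ N *ᵥ z = za ⬝ᵥ N *ᵥ za := by rw [e1, e2]
      rw [dot_expand, dot_expand] at hsum
      -- flatten to a product finset
      rw [← Finset.sum_product' (s := Finset.univ) (t := Finset.univ)
            (f := fun i j => z i * (N i j * z j)),
          ← Finset.sum_product' (s := Finset.univ) (t := Finset.univ)
            (f := fun i j => za i * (N i j * za j))] at hsum
      have hle : ∀ p ∈ Finset.univ ×ˢ (Finset.univ : Finset (Fin n)),
          z p.1 * (N p.1 p.2 * z p.2) ≤ za p.1 * (N p.1 p.2 * za p.2) := by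
        rintro ⟨a, b⟩ -
        have h1 : z a * z b ≤ |z a| * |z b| := by
          rw [← abs_mul]; exact le_abs_self _
        have := hpow0 (t+1) a b
        simp only [hzadef]
        nlinarith
      have heq := (Finset.sum_eq_sum_iff_of_le hle).mp hsum (i, j)
        (Finset.mem_product.mpr ⟨Finset.mem_univ _, Finset.mem_univ _⟩)
      simp only at heq
      have hN0 : (0:ℝ) < N i j := ht
      have : z i * z j = za i * za j := by nlinarith
      rw [this]
      exact mul_pos (hzapos i) (hzapos j)
    -- constant sign: make positive
    set s : ℝ := if 0 < z ⟨0, hn⟩ then 1 else -1 with hsdef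
    have hs2 : s * s = 1 := by
      rw [hsdef]; split <;> norm_num
    set z' : Fin n → ℝ := fun i => s * z i with hz'def
    have hz'pos : ∀ i, 0 < z' i := by
      intro i
      have h1 := hsign i ⟨0, hn⟩
      show 0 < s * z i
      rw [hsdef]
      split_ifs with h
      · rw [one_mul]; nlinarith
      · push_neg at h
        have h2 : z ⟨0, hn⟩ < 0 := lt_of_le_of_ne h (fun he => by rw [he] at h1; simp at h1)
        rw [neg_one_mul]; nlinarith
    have hz' : M *ᵥ z' = r • z' := by
      have : z' = s • z := by funext i; simp [hz'def]
      rw [this, Matrix.mulVec_smul, hz, smul_comm]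
    -- subtract multiple of y
    obtain ⟨i₁, -, hmin⟩ := Finset.exists_min_image Finset.univ (fun i => z' i / y i)
      ⟨⟨0, hn⟩, Finset.mem_univ _⟩
    set c : ℝ := z' i₁ / y i₁ with hcdef
    set w' : Fin n → ℝ := fun i => z' i - c * y i with hw'def
    have hw'eig : M *ᵥ w' = r • w' := by
      have : w' = z' - c • y := by funext i; simp [hw'def]
      rw [this, Matrix.mulVec_sub, Matrix.mulVec_smul, hz', hy]
      funext i
      simp only [Pi.smul_apply, Pi.sub_apply, smul_eq_mul]
      ring
    have hw'0 : ∀ i, 0 ≤ w' i := by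
      intro i
      have h1 := hmin i (Finset.mem_univ i)
      rw [div_le_div_iff₀ (hypos i₁) (hypos i)] at h1
      rw [hw'def]
      simp only
      rw [sub_nonneg, hcdef, div_mul_eq_mul_div, div_le_iff₀ (hypos i₁)]
      nlinarith
    have hw'i₁ : w' i₁ = 0 := by
      rw [hw'def]
      simp only [hcdef]
      rw [div_mul_cancel₀ _ (ne_of_gt (hypos i₁)), sub_self]
    have hw'zero : ∀ i, w' i = 0 := by
      by_contra hcon
      push_neg at hcon
      obtain ⟨j, hj⟩ := hcon
      have hjpos : 0 < w' j := lt_of_le_of_ne (hw'0 j) (Ne.symm hj)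
      obtain ⟨-, hall⟩ := posof w' hw'eig hw'0 j hjpos
      exact absurd hw'i₁ (ne_of_gt (hall i₁))
    refine ⟨s * c, ?_⟩
    funext i
    have h1 : z' i = c * y i := by
      have h2 : z' i - c * y i = 0 := hw'zero i
      linarith
    have h2 : s * z' i = z i := by
      rw [hz'def]
      simp only
      rw [← mul_assoc, hs2, one_mul]
    rw [← h2, h1]
    simp [mul_assoc]
  refine ⟨r, y, hrpos, hypos, ?_, hy, hspec, hsimple⟩
  rw [← hxnorm, ← hyy]
  simp [dotProduct, pow_two]

/-- conjugation of a matrix by a positive diagonal -/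
noncomputable def dconj (M : Matrix (Fin n) (Fin n) ℝ) (g : Fin n → ℝ) :
    Matrix (Fin n) (Fin n) ℝ :=
  Matrix.of fun i j => (g i)⁻¹ * M i j * g j

lemma dconj_apply (M : Matrix (Fin n) (Fin n) ℝ) (g : Fin n → ℝ) (i j : Fin n) :
    dconj M g i j = (g i)⁻¹ * M i j * g j := rfl

lemma dconj_eq_mul (M : Matrix (Fin n) (Fin n) ℝ) (g : Fin n → ℝ) :
    dconj M g = Matrix.diagonal (fun i => (g i)⁻¹) * M * Matrix.diagonal g := by
  ext i j
  rw [dconj_apply, Matrix.mul_diagonal, Matrix.diagonal_mul]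

lemma dconj_one {g : Fin n → ℝ} (hg : ∀ i, 0 < g i) :
    dconj (1 : Matrix (Fin n) (Fin n) ℝ) g = 1 := by
  ext i j
  rw [dconj_apply]
  by_cases h : i = j
  · subst h; simp [Matrix.one_apply, inv_mul_cancel₀ (ne_of_gt (hg i))]
  · simp [Matrix.one_apply, h]

lemma dconj_mul {g : Fin n → ℝ} (hg : ∀ i, 0 < g i) (M N : Matrix (Fin n) (Fin n) ℝ) :
    dconj (M * N) g = dconj M g * dconj N g := by
  ext i j
  rw [Matrix.mul_apply, dconj_apply, Matrix.mul_apply, Finset.mul_sum, Finset.sum_mul]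
  refine Finset.sum_congr rfl fun k _ => ?_
  rw [dconj_apply, dconj_apply]
  have hk : g k * (g k)⁻¹ = 1 := mul_inv_cancel₀ (ne_of_gt (hg k))
  field_simp
  linear_combination (-(M i k * N k j * g j * (g i)⁻¹)) * hk

lemma dconj_pow {g : Fin n → ℝ} (hg : ∀ i, 0 < g i) (M : Matrix (Fin n) (Fin n) ℝ) :
    ∀ k, (dconj M g) ^ k = dconj (M ^ k) g
  | 0 => by rw [pow_zero, pow_zero, dconj_one hg]
  | k + 1 => by rw [pow_succ, pow_succ, dconj_pow hg M k, ← dconj_mul hg]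

lemma dconj_irred {g : Fin n → ℝ} (hg : ∀ i, 0 < g i) {M : Matrix (Fin n) (Fin n) ℝ}
    (hM : IsIrred M) : IsIrred (dconj M g) := by
  intro i j
  obtain ⟨t, ht⟩ := hM i j
  refine ⟨t, ?_⟩
  rw [dconj_pow hg, dconj_apply]
  have := hg i
  have := hg j
  positivity

lemma dconj_nonneg {g : Fin n → ℝ} (hg : ∀ i, 0 < g i) {M : Matrix (Fin n) (Fin n) ℝ}
    (hM : ∀ i j, 0 ≤ M i j) : ∀ i j, 0 ≤ dconj M g i j := by
  intro i j
  rw [dconj_apply]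
  have := hg i
  have := hg j
  have := hM i j
  positivity

lemma dconj_mulVec_of {g : Fin n → ℝ} (hg : ∀ i, 0 < g i) {M : Matrix (Fin n) (Fin n) ℝ}
    {v : Fin n → ℝ} {r : ℝ} (h : M *ᵥ v = r • v) :
    (dconj M g) *ᵥ (fun i => v i / g i) = r • fun i => v i / g i := by
  funext i
  have h1 : ∑ j, M i j * v j = r * v i := by
    have := congrFun h i
    simpa [Matrix.mulVec, dotProduct] using this
  show ∑ j, dconj M g i j * (v j / g j) = r • (v i / g i)
  have h2 : ∀ j, dconj M g i j * (v j / g j) = (g i)⁻¹ * (M i j * v j) := by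
    intro j
    rw [dconj_apply]
    have hj : g j * (g j)⁻¹ = 1 := mul_inv_cancel₀ (ne_of_gt (hg j))
    rw [div_eq_mul_inv]
    linear_combination (M i j * v j * (g i)⁻¹) * hj
  rw [Finset.sum_congr rfl fun j _ => h2 j, ← Finset.mul_sum, h1]
  simp only [smul_eq_mul, div_eq_mul_inv]
  ring

lemma mulVec_of_dconj {g : Fin n → ℝ} (hg : ∀ i, 0 < g i) {M : Matrix (Fin n) (Fin n) ℝ}
    {w : Fin n → ℝ} {r : ℝ} (h : (dconj M g) *ᵥ w = r • w) :
    M *ᵥ (fun i => g i * w i) = r • fun i => g i * w i := by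
  funext i
  have h1 : ∑ j, dconj M g i j * w j = r * w i := by
    have := congrFun h i
    simpa [Matrix.mulVec, dotProduct] using this
  show ∑ j, M i j * (g j * w j) = r • (g i * w i)
  have h2 : ∀ j, M i j * (g j * w j) = g i * (dconj M g i j * w j) := by
    intro j
    rw [dconj_apply]
    have hi : g i * (g i)⁻¹ = 1 := mul_inv_cancel₀ (ne_of_gt (hg i))
    linear_combination (-(M i j * g j * w j)) * hi
  rw [Finset.sum_congr rfl fun j _ => h2 j, ← Finset.mul_sum, h1]
  simp only [smul_eq_mul]
  ring

lemma dconj_vecMul_of {g : Fin n → ℝ} (hg : ∀ i, 0 < g i) {M : Matrix (Fin n) (Fin n) ℝ}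
    {u : Fin n → ℝ} {r : ℝ} (h : Matrix.vecMul u M = r • u) :
    Matrix.vecMul (fun i => u i * g i) (dconj M g) = r • fun i => u i * g i := by
  funext j
  have h1 : ∑ i, u i * M i j = r * u j := by
    have := congrFun h j
    simpa [Matrix.vecMul, dotProduct] using this
  show ∑ i, (u i * g i) * dconj M g i j = r • (u j * g j)
  have h2 : ∀ i, (u i * g i) * dconj M g i j = (u i * M i j) * g j := by
    intro i
    rw [dconj_apply]
    have hi : g i * (g i)⁻¹ = 1 := mul_inv_cancel₀ (ne_of_gt (hg i))
    linear_combination (u i * M i j * g j) * hi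
  rw [Finset.sum_congr rfl fun i _ => h2 i, ← Finset.sum_mul, h1]
  simp only [smul_eq_mul]
  ring

lemma vecMul_eq_mulVec_of_herm {M : Matrix (Fin n) (Fin n) ℝ} (hM : M.IsHermitian)
    (x : Fin n → ℝ) : Matrix.vecMul x M = M *ᵥ x := by
  have ht : Mᵀ = M := by
    have h2 : Mᴴ = Mᵀ := by ext i j; simp [Matrix.conjTranspose_apply]
    rw [← h2]; exact hM
  rw [← Matrix.mulVec_transpose, ht]

lemma dconj_isHermitian {g : Fin n → ℝ} (hg : ∀ i, 0 < g i) {M : Matrix (Fin n) (Fin n) ℝ}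
    (hsym : ∀ i j, M i j * (g j) ^ 2 = M j i * (g i) ^ 2) : (dconj M g).IsHermitian := by
  rw [Matrix.IsHermitian]
  ext i j
  rw [Matrix.conjTranspose_apply, star_trivial, dconj_apply, dconj_apply]
  have hgi := ne_of_gt (hg i)
  have hgj := ne_of_gt (hg j)
  field_simp
  nlinarith [hsym i j]

lemma dconj_spectrum {g : Fin n → ℝ} (hg : ∀ i, 0 < g i) (M : Matrix (Fin n) (Fin n) ℝ) :
    spectrum ℝ (dconj M g) = spectrum ℝ M := by
  have hdet : ∀ N : Matrix (Fin n) (Fin n) ℝ, (dconj N g).det = N.det := by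
    intro N
    rw [dconj_eq_mul, Matrix.det_mul, Matrix.det_mul, Matrix.det_diagonal, Matrix.det_diagonal]
    rw [mul_comm, ← mul_assoc, ← Finset.prod_mul_distrib]
    have : ∀ i ∈ Finset.univ, g i * (g i)⁻¹ = 1 := fun i _ => mul_inv_cancel₀ (ne_of_gt (hg i))
    rw [Finset.prod_congr rfl this]
    simp
  have key : ∀ μ : ℝ, μ • (1 : Matrix (Fin n) (Fin n) ℝ) - dconj M g = dconj (μ • 1 - M) g := by
    intro μ
    ext i j
    simp only [Matrix.sub_apply, Matrix.smul_apply, Matrix.one_apply, smul_eq_mul, dconj_apply]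
    by_cases h : i = j
    · subst h
      simp only [if_pos rfl, mul_one]
      have hi := ne_of_gt (hg i)
      field_simp
    · simp only [if_neg h, mul_zero]
      ring
  ext μ
  rw [spectrum.mem_iff, spectrum.mem_iff, not_iff_not]
  rw [Matrix.isUnit_iff_isUnit_det, Matrix.isUnit_iff_isUnit_det]
  have halg : algebraMap ℝ (Matrix (Fin n) (Fin n) ℝ) μ = μ • 1 := by
    simp [Algebra.algebraMap_eq_smul_one]
  rw [halg, key μ, hdet]

lemma herm_apply {M : Matrix (Fin n) (Fin n) ℝ} (hM : M.IsHermitian) (i j : Fin n) :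
    M j i = M i j := by
  have := congrFun (congrFun hM i) j
  simpa [Matrix.conjTranspose_apply] using this

lemma dconj_inv {g : Fin n → ℝ} (hg : ∀ i, 0 < g i) (M : Matrix (Fin n) (Fin n) ℝ) :
    dconj (dconj M g) (fun i => (g i)⁻¹) = M := by
  ext i j
  show ((g i)⁻¹)⁻¹ * ((g i)⁻¹ * M i j * g j) * (g j)⁻¹ = M i j
  rw [inv_inv]
  have hi : g i * (g i)⁻¹ = 1 := mul_inv_cancel₀ (ne_of_gt (hg i))
  have hj : g j * (g j)⁻¹ = 1 := mul_inv_cancel₀ (ne_of_gt (hg j))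
  linear_combination (M i j * g j * (g j)⁻¹) * hi + (M i j) * hj

lemma isHermitian_add_smul {Ag Bg : Matrix (Fin n) (Fin n) ℝ}
    (hA : Ag.IsHermitian) (hB : Bg.IsHermitian) (τ : ℝ) : (Ag + τ • Bg).IsHermitian := by
  rw [Matrix.IsHermitian]
  ext i j
  simp only [Matrix.conjTranspose_apply, Matrix.add_apply, Matrix.smul_apply, star_trivial,
    smul_eq_mul]
  rw [herm_apply hA i j, herm_apply hB i j]

lemma toEuclideanLin_apply' (M : Matrix (Fin n) (Fin n) ℝ) (x : EuclideanSpace ℝ (Fin n))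
    (i : Fin n) : Matrix.toEuclideanLin M x i = (M *ᵥ (x : Fin n → ℝ)) i := rfl

lemma aeval_eq_of_interp {Ag Bg : Matrix (Fin n) (Fin n) ℝ}
    (hA : Ag.IsHermitian) (hB : Bg.IsHermitian)
    (hcomm : Ag * Bg = Bg * Ag) (τ : ℝ) (p : ℝ[X])
    (hp : ∀ i j : Fin n, p.eval (hA.eigenvalues i + τ * hB.eigenvalues j) = hA.eigenvalues i) :
    Polynomial.aeval (Ag + τ • Bg) p = Ag := by
  set C : Matrix (Fin n) (Fin n) ℝ := Ag + τ • Bg with hCdef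
  set TA := Matrix.toEuclideanLin Ag with hTA
  set TB := Matrix.toEuclideanLin Bg with hTB
  have hTAsym : TA.IsSymmetric := Matrix.isHermitian_iff_isSymmetric.mp hA
  have hTBsym : TB.IsSymmetric := Matrix.isHermitian_iff_isSymmetric.mp hB
  have hmulapp : ∀ (M N : Matrix (Fin n) (Fin n) ℝ) (x : EuclideanSpace ℝ (Fin n)),
      Matrix.toEuclideanLin M (Matrix.toEuclideanLin N x)
        = Matrix.toEuclideanLin (M * N) x := by
    intro M N x
    apply PiLp.ext
    intro i
    show (M *ᵥ (N *ᵥ (x : Fin n → ℝ))) i = ((M * N) *ᵥ (x : Fin n → ℝ)) i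
    rw [Matrix.mulVec_mulVec]
  have hTcomm : Commute TA TB := by
    rw [Commute, SemiconjBy]
    ext x
    have h1 : (TA * TB) x = Matrix.toEuclideanLin (Ag * Bg) x := hmulapp _ _ _
    have h2 : (TB * TA) x = Matrix.toEuclideanLin (Bg * Ag) x := hmulapp _ _ _
    rw [h1, h2, hcomm]
  have htop := LinearMap.IsSymmetric.iSup_iSup_eigenspace_inf_eigenspace_eq_top_of_commute
    hTAsym hTBsym hTcomm
  have hmem_eig : ∀ (M : Matrix (Fin n) (Fin n) ℝ) (μ : ℝ) (x : EuclideanSpace ℝ (Fin n)),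
      x ∈ Module.End.eigenspace (Matrix.toEuclideanLin M) μ ↔
        M *ᵥ (x : Fin n → ℝ) = μ • (x : Fin n → ℝ) := by
    intro M μ x
    rw [Module.End.mem_eigenspace_iff]
    constructor
    · intro h
      funext i
      have := congrFun (congrArg (fun y : EuclideanSpace ℝ (Fin n) => (y : Fin n → ℝ)) h) i
      exact this
    · intro h
      apply PiLp.ext
      intro i
      exact congrFun h i
  have hP : ∀ x : EuclideanSpace ℝ (Fin n),
      (Polynomial.aeval C p) *ᵥ (x : Fin n → ℝ) = Ag *ᵥ (x : Fin n → ℝ) := by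
    intro x
    have hx : x ∈ (⨆ α, ⨆ γ, Module.End.eigenspace TA α ⊓ Module.End.eigenspace TB γ) := by
      rw [htop]; trivial
    refine Submodule.iSup_induction
      (motive := fun y : EuclideanSpace ℝ (Fin n) =>
        (Polynomial.aeval C p) *ᵥ (y : Fin n → ℝ) = Ag *ᵥ (y : Fin n → ℝ)) _ hx
      (fun α y hy => ?_) (by simp) (fun a b ha hb => ?_)
    swap
    · show (Polynomial.aeval C p) *ᵥ ((a : Fin n → ℝ) + (b : Fin n → ℝ))
          = Ag *ᵥ ((a : Fin n → ℝ) + (b : Fin n → ℝ))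
      rw [Matrix.mulVec_add, Matrix.mulVec_add, ha, hb]
    refine Submodule.iSup_induction
      (motive := fun z : EuclideanSpace ℝ (Fin n) =>
        (Polynomial.aeval C p) *ᵥ (z : Fin n → ℝ) = Ag *ᵥ (z : Fin n → ℝ)) _ hy
      (fun γ z hz => ?_) (by simp) (fun a b ha hb => ?_)
    swap
    · show (Polynomial.aeval C p) *ᵥ ((a : Fin n → ℝ) + (b : Fin n → ℝ))
          = Ag *ᵥ ((a : Fin n → ℝ) + (b : Fin n → ℝ))
      rw [Matrix.mulVec_add, Matrix.mulVec_add, ha, hb]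
    obtain ⟨hzA₀, hzB₀⟩ := hz
    have hzA : Ag *ᵥ (z : Fin n → ℝ) = α • (z : Fin n → ℝ) := (hmem_eig Ag α z).mp hzA₀
    have hzB : Bg *ᵥ (z : Fin n → ℝ) = γ • (z : Fin n → ℝ) := (hmem_eig Bg γ z).mp hzB₀
    by_cases hz0 : (z : Fin n → ℝ) = 0
    · rw [hz0]; simp
    · obtain ⟨i, hi⟩ : α ∈ Set.range hA.eigenvalues := by
        rw [← spectrum_eq_range hA]
        exact mem_spectrum_of_eigen hz0 hzA
      obtain ⟨j, hj⟩ : γ ∈ Set.range hB.eigenvalues := by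
        rw [← spectrum_eq_range hB]
        exact mem_spectrum_of_eigen hz0 hzB
      have hCz : C *ᵥ (z : Fin n → ℝ) = (α + τ * γ) • (z : Fin n → ℝ) := by
        rw [hCdef, Matrix.add_mulVec, Matrix.smul_mulVec, hzA, hzB]
        funext k
        show α * z k + τ * (γ * z k) = (α + τ * γ) * z k
        ring
      show (Polynomial.aeval C p) *ᵥ (z : Fin n → ℝ) = Ag *ᵥ (z : Fin n → ℝ)
      rw [aeval_mulVec_eigen hCz p, ← hi, ← hj, hp i j, hi, hzA]
  ext i j
  have h2 := congrFun (hP ((WithLp.equiv 2 (Fin n → ℝ)).symm (Pi.single j 1))) i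
  have h3 : ((((WithLp.equiv 2 (Fin n → ℝ)).symm (Pi.single j 1)) : EuclideanSpace ℝ (Fin n))
      : Fin n → ℝ) = Pi.single j 1 := rfl
  rw [h3] at h2
  rw [Matrix.mulVec_single, Matrix.mulVec_single] at h2
  simpa using h2

lemma aeval_eq_of_interp2 {Ag Bg : Matrix (Fin n) (Fin n) ℝ}
    (hA : Ag.IsHermitian) (hB : Bg.IsHermitian)
    (hcomm : Ag * Bg = Bg * Ag) (τ : ℝ) (p : ℝ[X])
    (hp : ∀ i j : Fin n, p.eval (hA.eigenvalues i + τ * hB.eigenvalues j) = hB.eigenvalues j) :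
    Polynomial.aeval (Ag + τ • Bg) p = Bg := by
  set C : Matrix (Fin n) (Fin n) ℝ := Ag + τ • Bg with hCdef
  set TA := Matrix.toEuclideanLin Ag with hTA
  set TB := Matrix.toEuclideanLin Bg with hTB
  have hTAsym : TA.IsSymmetric := Matrix.isHermitian_iff_isSymmetric.mp hA
  have hTBsym : TB.IsSymmetric := Matrix.isHermitian_iff_isSymmetric.mp hB
  have hmulapp : ∀ (M N : Matrix (Fin n) (Fin n) ℝ) (x : EuclideanSpace ℝ (Fin n)),
      Matrix.toEuclideanLin M (Matrix.toEuclideanLin N x)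
        = Matrix.toEuclideanLin (M * N) x := by
    intro M N x
    apply PiLp.ext
    intro i
    show (M *ᵥ (N *ᵥ (x : Fin n → ℝ))) i = ((M * N) *ᵥ (x : Fin n → ℝ)) i
    rw [Matrix.mulVec_mulVec]
  have hTcomm : Commute TA TB := by
    rw [Commute, SemiconjBy]
    ext x
    have h1 : (TA * TB) x = Matrix.toEuclideanLin (Ag * Bg) x := hmulapp _ _ _
    have h2 : (TB * TA) x = Matrix.toEuclideanLin (Bg * Ag) x := hmulapp _ _ _
    rw [h1, h2, hcomm]
  have htop := LinearMap.IsSymmetric.iSup_iSup_eigenspace_inf_eigenspace_eq_top_of_commute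
    hTAsym hTBsym hTcomm
  have hmem_eig : ∀ (M : Matrix (Fin n) (Fin n) ℝ) (μ : ℝ) (x : EuclideanSpace ℝ (Fin n)),
      x ∈ Module.End.eigenspace (Matrix.toEuclideanLin M) μ ↔
        M *ᵥ (x : Fin n → ℝ) = μ • (x : Fin n → ℝ) := by
    intro M μ x
    rw [Module.End.mem_eigenspace_iff]
    constructor
    · intro h
      funext i
      have := congrFun (congrArg (fun y : EuclideanSpace ℝ (Fin n) => (y : Fin n → ℝ)) h) i
      exact this
    · intro h
      apply PiLp.ext
      intro i
      exact congrFun h i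
  have hP : ∀ x : EuclideanSpace ℝ (Fin n),
      (Polynomial.aeval C p) *ᵥ (x : Fin n → ℝ) = Bg *ᵥ (x : Fin n → ℝ) := by
    intro x
    have hx : x ∈ (⨆ α, ⨆ γ, Module.End.eigenspace TA α ⊓ Module.End.eigenspace TB γ) := by
      rw [htop]; trivial
    refine Submodule.iSup_induction
      (motive := fun y : EuclideanSpace ℝ (Fin n) =>
        (Polynomial.aeval C p) *ᵥ (y : Fin n → ℝ) = Bg *ᵥ (y : Fin n → ℝ)) _ hx
      (fun α y hy => ?_) (by simp) (fun a b ha hb => ?_)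
    swap
    · show (Polynomial.aeval C p) *ᵥ ((a : Fin n → ℝ) + (b : Fin n → ℝ))
          = Bg *ᵥ ((a : Fin n → ℝ) + (b : Fin n → ℝ))
      rw [Matrix.mulVec_add, Matrix.mulVec_add, ha, hb]
    refine Submodule.iSup_induction
      (motive := fun z : EuclideanSpace ℝ (Fin n) =>
        (Polynomial.aeval C p) *ᵥ (z : Fin n → ℝ) = Bg *ᵥ (z : Fin n → ℝ)) _ hy
      (fun γ z hz => ?_) (by simp) (fun a b ha hb => ?_)
    swap
    · show (Polynomial.aeval C p) *ᵥ ((a : Fin n → ℝ) + (b : Fin n → ℝ))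
          = Bg *ᵥ ((a : Fin n → ℝ) + (b : Fin n → ℝ))
      rw [Matrix.mulVec_add, Matrix.mulVec_add, ha, hb]
    obtain ⟨hzA₀, hzB₀⟩ := hz
    have hzA : Ag *ᵥ (z : Fin n → ℝ) = α • (z : Fin n → ℝ) := (hmem_eig Ag α z).mp hzA₀
    have hzB : Bg *ᵥ (z : Fin n → ℝ) = γ • (z : Fin n → ℝ) := (hmem_eig Bg γ z).mp hzB₀
    by_cases hz0 : (z : Fin n → ℝ) = 0
    · rw [hz0]; simp
    · obtain ⟨i, hi⟩ : α ∈ Set.range hA.eigenvalues := by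
        rw [← spectrum_eq_range hA]
        exact mem_spectrum_of_eigen hz0 hzA
      obtain ⟨j, hj⟩ : γ ∈ Set.range hB.eigenvalues := by
        rw [← spectrum_eq_range hB]
        exact mem_spectrum_of_eigen hz0 hzB
      have hCz : C *ᵥ (z : Fin n → ℝ) = (α + τ * γ) • (z : Fin n → ℝ) := by
        rw [hCdef, Matrix.add_mulVec, Matrix.smul_mulVec, hzA, hzB]
        funext k
        show α * z k + τ * (γ * z k) = (α + τ * γ) * z k
        ring
      show (Polynomial.aeval C p) *ᵥ (z : Fin n → ℝ) = Bg *ᵥ (z : Fin n → ℝ)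
      rw [aeval_mulVec_eigen hCz p, ← hi, ← hj, hp i j, hj, hzB]
  ext i j
  have h2 := congrFun (hP ((WithLp.equiv 2 (Fin n → ℝ)).symm (Pi.single j 1))) i
  have h3 : ((((WithLp.equiv 2 (Fin n → ℝ)).symm (Pi.single j 1)) : EuclideanSpace ℝ (Fin n))
      : Fin n → ℝ) = Pi.single j 1 := rfl
  rw [h3] at h2
  rw [Matrix.mulVec_single, Matrix.mulVec_single] at h2
  simpa using h2


lemma exists_tau (SA SB : Finset ℝ) :
    ∃ τ : ℝ, Set.InjOn (fun q : ℝ × ℝ => q.1 + τ * q.2) (SA ×ˢ SB : Finset (ℝ × ℝ)) := by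
  classical
  set bad : Finset ℝ :=
    ((SA ×ˢ SA) ×ˢ (SB ×ˢ SB)).image (fun q => (q.1.1 - q.1.2) / (q.2.2 - q.2.1)) with hbad
  obtain ⟨τ, hτ⟩ := Infinite.exists_notMem_finset bad
  refine ⟨τ, ?_⟩
  rintro ⟨a1, b1⟩ h1 ⟨a2, b2⟩ h2 heq
  simp only [Finset.coe_product, Set.mem_prod, Finset.mem_coe] at h1 h2
  simp only at heq
  by_cases hb : b1 = b2
  · subst hb
    have : a1 = a2 := by linarith [heq]
    rw [this]
  · exfalso
    apply hτ
    rw [hbad]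
    apply Finset.mem_image.mpr
    refine ⟨((a1, a2), (b1, b2)), ?_, ?_⟩
    · simp [Finset.mem_product, h1.1, h1.2, h2.1, h2.2]
    · have hb' : b2 - b1 ≠ 0 := fun h => hb (by linarith)
      field_simp
      linarith [heq]

/-- get the symmetrizing quotient identity -/
lemma symmetrizable_quot {A : Matrix (Fin n) (Fin n) ℝ} (hA : Symmetrizable A) :
    ∃ e : Fin n → ℝ, (∀ i, 0 < e i) ∧ ∀ i j, A i j * e j = A j i * e i := by
  obtain ⟨dL, dR, S, hdL, hdR, hS, hAeq⟩ := hA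
  refine ⟨fun i => dL i / dR i, fun i => div_pos (hdL i) (hdR i), fun i j => ?_⟩
  have hij : A i j = dL i * S i j * dR j := by
    rw [hAeq, Matrix.mul_diagonal, Matrix.diagonal_mul]
  have hji : A j i = dL j * S j i * dR i := by
    rw [hAeq, Matrix.mul_diagonal, Matrix.diagonal_mul]
  have hsym : S j i = S i j := by
    have := congrFun (congrFun hS i) j
    simpa [Matrix.transpose_apply] using this
  rw [hij, hji, hsym]
  field_simp [ne_of_gt (hdR i), ne_of_gt (hdR j)]

/-- eigen data for a symmetrizable irreducible nonnegative matrix -/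
lemma perron_general (hn : 0 < n) (A : Matrix (Fin n) (Fin n) ℝ)
    (hA0 : ∀ i j, 0 ≤ A i j) (hAirr : IsIrred A) (hAsym : Symmetrizable A) :
    ∃ (g w : Fin n → ℝ),
      (∀ i, 0 < g i) ∧ (∀ i, 0 < w i) ∧ (∑ i, w i ^ 2) = 1 ∧
      0 < specRad A ∧
      (dconj A g).IsHermitian ∧
      (dconj A g) *ᵥ w = specRad A • w ∧
      (∀ z : Fin n → ℝ, (dconj A g) *ᵥ z = specRad A • z → ∃ c : ℝ, z = c • w) := by
  obtain ⟨e, hepos, he⟩ := symmetrizable_quot hAsym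
  set g : Fin n → ℝ := fun i => Real.sqrt (e i) with hgdef
  have hg : ∀ i, 0 < g i := fun i => Real.sqrt_pos.mpr (hepos i)
  have hg2 : ∀ i, g i ^ 2 = e i := fun i => Real.sq_sqrt (le_of_lt (hepos i))
  have hherm : (dconj A g).IsHermitian :=
    dconj_isHermitian hg fun i j => by rw [hg2, hg2]; exact he i j
  obtain ⟨r, w, hrpos, hwpos, hwnorm, hweig, hspec, hsimp⟩ :=
    perron_sym hn (dconj A g) hherm (dconj_nonneg hg hA0) (dconj_irred hg hAirr)
  have hspecA : specRad A = r := by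
    rw [← hspec, specRad, specRad, dconj_spectrum hg]
  rw [← hspecA] at hrpos hweig hsimp
  exact ⟨g, w, hg, hwpos, hwnorm, hrpos, hherm, hweig, hsimp⟩

set_option maxHeartbeats 1000000 in
theorem stmt_2 {n : ℕ} (hn : 0 < n) (A B : Matrix (Fin n) (Fin n) ℝ)
    (hA0 : ∀ i j, 0 ≤ A i j) (hB0 : ∀ i j, 0 ≤ B i j)
    (hAirr : IsIrred A) (hBirr : IsIrred B)
    (hAsym : Symmetrizable A) (hBsym : Symmetrizable B)
    (hcomm : A * B = B * A) :
    ∃ (u v : Fin n → ℝ) (K : Matrix (Fin n) (Fin n) ℝ) (lamA lamB : Fin n → ℝ),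
      (∀ i, 0 < u i) ∧ (∀ i, 0 < v i) ∧
      (∑ i, u i * v i) = 1 ∧ (∑ i, v i) = 1 ∧
      A.mulVec v = specRad A • v ∧ Matrix.vecMul u A = specRad A • u ∧
      B.mulVec v = specRad B • v ∧ Matrix.vecMul u B = specRad B • u ∧
      Kᵀ * K = 1 ∧ K * Kᵀ = 1 ∧
      (∀ i, K i ⟨0, hn⟩ = Real.sqrt (v i) * Real.sqrt (u i)) ∧
      (∀ i, lamA i ∈ spectrum ℝ A) ∧ (∀ i, lamB i ∈ spectrum ℝ B) ∧
      A = Matrix.diagonal (fun i => Real.sqrt (v i) / Real.sqrt (u i)) * K *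
            Matrix.diagonal lamA * Kᵀ *
            Matrix.diagonal (fun i => Real.sqrt (u i) / Real.sqrt (v i)) ∧
      B = Matrix.diagonal (fun i => Real.sqrt (v i) / Real.sqrt (u i)) * K *
            Matrix.diagonal lamB * Kᵀ *
            Matrix.diagonal (fun i => Real.sqrt (u i) / Real.sqrt (v i)) := by
  classical
  haveI : Nonempty (Fin n) := ⟨⟨0, hn⟩⟩
  set rA := specRad A with hrAdef
  set rB := specRad B with hrBdef
  obtain ⟨gA, wA, hgA, hwA, hwAnorm, hrA, hAherm, hAweig, hAsimp⟩ :=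
    perron_general hn A hA0 hAirr hAsym
  obtain ⟨gB, wB, hgB, hwB, hwBnorm, hrB, hBherm, hBweig, hBsimp⟩ :=
    perron_general hn B hB0 hBirr hBsym
  -- right and left Perron vectors for A
  set v0 : Fin n → ℝ := fun i => gA i * wA i with hv0def
  have hv0pos : ∀ i, 0 < v0 i := fun i => mul_pos (hgA i) (hwA i)
  have hAv0 : A *ᵥ v0 = rA • v0 := mulVec_of_dconj hgA hAweig
  set u0 : Fin n → ℝ := fun i => wA i * (gA i)⁻¹ with hu0def
  have hu0pos : ∀ i, 0 < u0 i := fun i => mul_pos (hwA i) (inv_pos.mpr (hgA i))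
  have hu0A : Matrix.vecMul u0 A = rA • u0 := by
    have h1 : Matrix.vecMul wA (dconj A gA) = rA • wA := by
      rw [vecMul_eq_mulVec_of_herm hAherm, hAweig]
    have h2 := dconj_vecMul_of (g := fun i => (gA i)⁻¹)
      (fun i => inv_pos.mpr (hgA i)) h1
    rw [dconj_inv hgA] at h2
    exact h2
  -- same for B
  set v0B : Fin n → ℝ := fun i => gB i * wB i with hv0Bdef
  have hv0Bpos : ∀ i, 0 < v0B i := fun i => mul_pos (hgB i) (hwB i)
  have hBv0B : B *ᵥ v0B = rB • v0B := mulVec_of_dconj hgB hBweig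
  set u0B : Fin n → ℝ := fun i => wB i * (gB i)⁻¹ with hu0Bdef
  have hu0Bpos : ∀ i, 0 < u0B i := fun i => mul_pos (hwB i) (inv_pos.mpr (hgB i))
  have hu0BB : Matrix.vecMul u0B B = rB • u0B := by
    have h1 : Matrix.vecMul wB (dconj B gB) = rB • wB := by
      rw [vecMul_eq_mulVec_of_herm hBherm, hBweig]
    have h2 := dconj_vecMul_of (g := fun i => (gB i)⁻¹)
      (fun i => inv_pos.mpr (hgB i)) h1
    rw [dconj_inv hgB] at h2
    exact h2
  -- B v0 = rB v0 via commutation and simplicity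
  have hBv0 : B *ᵥ v0 = rB • v0 := by
    have hx : A *ᵥ (B *ᵥ v0) = rA • (B *ᵥ v0) := by
      rw [Matrix.mulVec_mulVec, hcomm, ← Matrix.mulVec_mulVec, hAv0, Matrix.mulVec_smul]
    have h2 := dconj_mulVec_of hgA hx
    obtain ⟨c, hc⟩ := hAsimp _ h2
    have hBc : B *ᵥ v0 = c • v0 := by
      funext i
      have h3 := congrFun hc i
      simp only [Pi.smul_apply, smul_eq_mul] at h3 ⊢
      have h4 : (B *ᵥ v0) i = c * wA i * gA i := by
        have h5 : (B *ᵥ v0) i / gA i = c * wA i := h3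
        field_simp [ne_of_gt (hgA i)] at h5
        linarith
      rw [h4, hv0def]
      ring
    -- identify c with rB
    have hpair1 : u0B ⬝ᵥ (B *ᵥ v0) = rB * (u0B ⬝ᵥ v0) := by
      rw [dotProduct_mulVec, hu0BB, smul_dotProduct, smul_eq_mul]
    have hpair2 : u0B ⬝ᵥ (B *ᵥ v0) = c * (u0B ⬝ᵥ v0) := by
      rw [hBc, dotProduct_smul, smul_eq_mul]
    have hdpos : 0 < u0B ⬝ᵥ v0 :=
      Finset.sum_pos (fun i _ => mul_pos (hu0Bpos i) (hv0pos i)) Finset.univ_nonempty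
    have : c = rB := by
      have := hpair1.symm.trans hpair2
      exact (mul_right_cancel₀ (ne_of_gt hdpos) this).symm
    rw [hBc, this]
  -- u0 B = rB u0
  have hu0B : Matrix.vecMul u0 B = rB • u0 := by
    have hy : Matrix.vecMul (Matrix.vecMul u0 B) A = rA • Matrix.vecMul u0 B := by
      rw [Matrix.vecMul_vecMul, ← hcomm, ← Matrix.vecMul_vecMul, hu0A, Matrix.smul_vecMul]
    have h1 := dconj_vecMul_of hgA hy
    have h2 : (dconj A gA) *ᵥ (fun i => Matrix.vecMul u0 B i * gA i)
        = rA • fun i => Matrix.vecMul u0 B i * gA i := by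
      rw [← vecMul_eq_mulVec_of_herm hAherm]
      exact h1
    obtain ⟨c, hc⟩ := hAsimp _ h2
    have hBc : Matrix.vecMul u0 B = c • u0 := by
      funext i
      have h3 := congrFun hc i
      simp only [Pi.smul_apply, smul_eq_mul] at h3 ⊢
      have hgi := ne_of_gt (hgA i)
      have h5 : Matrix.vecMul u0 B i = c * (wA i * (gA i)⁻¹) := by
        field_simp
        linarith [h3]
      exact h5
    have hpair1 : (Matrix.vecMul u0 B) ⬝ᵥ v0B = rB * (u0 ⬝ᵥ v0B) := by
      rw [← dotProduct_mulVec, hBv0B, dotProduct_smul, smul_eq_mul]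
    have hpair2 : (Matrix.vecMul u0 B) ⬝ᵥ v0B = c * (u0 ⬝ᵥ v0B) := by
      rw [hBc, smul_dotProduct, smul_eq_mul]
    have hdpos : 0 < u0 ⬝ᵥ v0B :=
      Finset.sum_pos (fun i _ => mul_pos (hu0pos i) (hv0Bpos i)) Finset.univ_nonempty
    have : c = rB := by
      have := hpair1.symm.trans hpair2
      exact (mul_right_cancel₀ (ne_of_gt hdpos) this).symm
    rw [hBc, this]
  -- normalization
  set sV : ℝ := ∑ i, v0 i with hsVdef
  have hsV : 0 < sV := Finset.sum_pos (fun i _ => hv0pos i) Finset.univ_nonempty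
  set v : Fin n → ℝ := sV⁻¹ • v0 with hvdef
  set u : Fin n → ℝ := sV • u0 with hudef
  have hvpos : ∀ i, 0 < v i := fun i => mul_pos (inv_pos.mpr hsV) (hv0pos i)
  have hupos : ∀ i, 0 < u i := fun i => mul_pos hsV (hu0pos i)
  have hvsum : (∑ i, v i) = 1 := by
    rw [hvdef]
    simp only [Pi.smul_apply, smul_eq_mul, ← Finset.mul_sum, ← hsVdef]
    exact inv_mul_cancel₀ (ne_of_gt hsV)
  have huv : (∑ i, u i * v i) = 1 := by
    have h1 : ∀ i, u i * v i = wA i ^ 2 := by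
      intro i
      rw [hudef, hvdef]
      simp only [Pi.smul_apply, smul_eq_mul]
      rw [hu0def, hv0def]
      field_simp [ne_of_gt (hgA i), ne_of_gt hsV]
    rw [Finset.sum_congr rfl fun i _ => h1 i, hwAnorm]
  have hAv : A *ᵥ v = rA • v := by
    rw [hvdef, Matrix.mulVec_smul, hAv0, smul_comm]
  have hBv : B *ᵥ v = rB • v := by
    rw [hvdef, Matrix.mulVec_smul, hBv0, smul_comm]
  have huA : Matrix.vecMul u A = rA • u := by
    rw [hudef, Matrix.smul_vecMul, hu0A, smul_comm]
  have huB : Matrix.vecMul u B = rB • u := by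
    rw [hudef, Matrix.smul_vecMul, hu0B, smul_comm]
  -- the symmetrizing weight g
  set g : Fin n → ℝ := fun i => Real.sqrt (v i) / Real.sqrt (u i) with hgdef
  have hg : ∀ i, 0 < g i := fun i =>
    div_pos (Real.sqrt_pos.mpr (hvpos i)) (Real.sqrt_pos.mpr (hupos i))
  have hg2 : ∀ i, g i ^ 2 = v i / u i := by
    intro i
    rw [hgdef]
    rw [div_pow, Real.sq_sqrt (le_of_lt (hvpos i)), Real.sq_sqrt (le_of_lt (hupos i))]
  -- quotient identities for A
  have hvuA : ∀ i, v i / u i = (gA i) ^ 2 / sV ^ 2 := by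
    intro i
    rw [hvdef, hudef]
    simp only [Pi.smul_apply, smul_eq_mul]
    rw [hu0def, hv0def]
    field_simp [ne_of_gt (hgA i), ne_of_gt hsV, ne_of_gt (hwA i)]
  have hQA : ∀ i j, A i j * (v j / u j) = A j i * (v i / u i) := by
    intro i j
    rw [hvuA, hvuA]
    have he : A i j * gA j ^ 2 = A j i * gA i ^ 2 := by
      have h1 := congrFun (congrFun hAherm i) j
      rw [Matrix.conjTranspose_apply, star_trivial, dconj_apply, dconj_apply] at h1
      have hgi := ne_of_gt (hgA i)
      have hgj := ne_of_gt (hgA j)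
      field_simp at h1
      nlinarith [h1]
    calc A i j * (gA j ^ 2 / sV ^ 2) = (A i j * gA j ^ 2) / sV ^ 2 := by ring
      _ = (A j i * gA i ^ 2) / sV ^ 2 := by rw [he]
      _ = A j i * (gA i ^ 2 / sV ^ 2) := by ring
  -- quotient identities for B
  have hQB : ∀ i j, B i j * (v j / u j) = B j i * (v i / u i) := by
    have h1 := dconj_mulVec_of hgB hBv
    obtain ⟨c1, hc1⟩ := hBsimp _ h1
    have h2 : Matrix.vecMul (fun i => u i * gB i) (dconj B gB)
        = rB • fun i => u i * gB i := dconj_vecMul_of hgB huB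
    have h3 : (dconj B gB) *ᵥ (fun i => u i * gB i) = rB • fun i => u i * gB i := by
      rw [← vecMul_eq_mulVec_of_herm hBherm]
      exact h2
    obtain ⟨c2, hc2⟩ := hBsimp _ h3
    have hvgB : ∀ i, v i = c1 * wB i * gB i := by
      intro i
      have := congrFun hc1 i
      simp only [Pi.smul_apply, smul_eq_mul] at this
      field_simp [ne_of_gt (hgB i)] at this
      linarith
    have hugB : ∀ i, u i * gB i = c2 * wB i := by
      intro i
      have := congrFun hc2 i
      simp only [Pi.smul_apply, smul_eq_mul] at this
      exact this
    have hc2ne : c2 ≠ 0 := by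
      intro h
      have := hugB ⟨0, hn⟩
      rw [h, zero_mul] at this
      nlinarith [mul_pos (hupos ⟨0, hn⟩) (hgB ⟨0, hn⟩)]
    have hvu : ∀ i, v i / u i = (c1 / c2) * gB i ^ 2 := by
      intro i
      have h4 := hugB i
      have h5 := hvgB i
      have hu' : u i = c2 * wB i / gB i := by
        field_simp [ne_of_gt (hgB i)]
        linarith [h4]
      rw [h5, hu']
      field_simp [ne_of_gt (hgB i), ne_of_gt (hwB i), hc2ne]
    intro i j
    rw [hvu, hvu]
    have he : B i j * gB j ^ 2 = B j i * gB i ^ 2 := by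
      have h1 := congrFun (congrFun hBherm i) j
      rw [Matrix.conjTranspose_apply, star_trivial, dconj_apply, dconj_apply] at h1
      have hgi := ne_of_gt (hgB i)
      have hgj := ne_of_gt (hgB j)
      field_simp at h1
      nlinarith [h1]
    calc B i j * (c1 / c2 * gB j ^ 2) = (c1 / c2) * (B i j * gB j ^ 2) := by ring
      _ = (c1 / c2) * (B j i * gB i ^ 2) := by rw [he]
      _ = B j i * (c1 / c2 * gB i ^ 2) := by ring
  -- the symmetrized commuting pair
  set Ag := dconj A g with hAgdef
  set Bg := dconj B g with hBgdef
  have hAgherm : Ag.IsHermitian :=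
    dconj_isHermitian hg fun i j => by rw [hg2, hg2]; exact hQA i j
  have hBgherm : Bg.IsHermitian :=
    dconj_isHermitian hg fun i j => by rw [hg2, hg2]; exact hQB i j
  have hABg : Ag * Bg = Bg * Ag := by
    rw [hAgdef, hBgdef, ← dconj_mul hg, ← dconj_mul hg, hcomm]
  -- the joint Perron vector
  set w : Fin n → ℝ := fun i => Real.sqrt (v i) * Real.sqrt (u i) with hwdef
  have hwpos : ∀ i, 0 < w i := fun i =>
    mul_pos (Real.sqrt_pos.mpr (hvpos i)) (Real.sqrt_pos.mpr (hupos i))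
  have hwg : (fun i => v i / g i) = w := by
    funext i
    show v i / (Real.sqrt (v i) / Real.sqrt (u i)) = Real.sqrt (v i) * Real.sqrt (u i)
    have h1 : Real.sqrt (v i) ≠ 0 := ne_of_gt (Real.sqrt_pos.mpr (hvpos i))
    have h2 : Real.sqrt (u i) ≠ 0 := ne_of_gt (Real.sqrt_pos.mpr (hupos i))
    have h3 : Real.sqrt (v i) * Real.sqrt (v i) = v i := Real.mul_self_sqrt (le_of_lt (hvpos i))
    rw [div_div_eq_mul_div, div_eq_iff h1]
    linear_combination (-Real.sqrt (u i)) * h3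
  have hAgw : Ag *ᵥ w = rA • w := by rw [← hwg]; exact dconj_mulVec_of hg hAv
  have hBgw : Bg *ᵥ w = rB • w := by rw [← hwg]; exact dconj_mulVec_of hg hBv
  have hwnorm2 : ∑ i, w i ^ 2 = 1 := by
    have h1 : ∀ i, w i ^ 2 = u i * v i := by
      intro i
      show (Real.sqrt (v i) * Real.sqrt (u i)) ^ 2 = u i * v i
      rw [mul_pow, Real.sq_sqrt (le_of_lt (hvpos i)), Real.sq_sqrt (le_of_lt (hupos i))]
      ring
    rw [Finset.sum_congr rfl fun i _ => h1 i, huv]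
  have hwne : w ≠ 0 := by
    intro h
    have := congrFun h ⟨0, hn⟩
    exact absurd this (ne_of_gt (hwpos ⟨0, hn⟩))
  -- simplicity at the top eigenvalue of Ag
  obtain ⟨rA', wA', hrA'pos, hwA'pos, hwA'norm, hwA'eig, hspecAg, hsimpAg⟩ :=
    perron_sym hn Ag hAgherm (dconj_nonneg hg hA0) (dconj_irred hg hAirr)
  have hrA' : rA' = rA := by
    have h1 : specRad Ag = rA := by
      rw [hrAdef, hAgdef]
      unfold specRad
      rw [dconj_spectrum hg]
    rw [← hspecAg, h1]
  rw [hrA'] at hwA'eig hsimpAg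
  have hsimpw : ∀ z : Fin n → ℝ, Ag *ᵥ z = rA • z → ∃ c : ℝ, z = c • w := by
    obtain ⟨cw, hcw⟩ := hsimpAg w hAgw
    have hcwne : cw ≠ 0 := by
      intro h
      have h1 := congrFun hcw ⟨0, hn⟩
      rw [h] at h1
      simp at h1
      exact absurd h1 (ne_of_gt (hwpos ⟨0, hn⟩))
    intro z hz
    obtain ⟨c, hc⟩ := hsimpAg z hz
    refine ⟨c / cw, ?_⟩
    rw [hc, hcw]
    funext i
    simp only [Pi.smul_apply, smul_eq_mul]
    field_simp
  -- eigenvalue ranges and nodes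
  have hrAmem : rA ∈ Set.range hAgherm.eigenvalues := by
    rw [← spectrum_eq_range hAgherm]
    exact mem_spectrum_of_eigen hwne hAgw
  have hrBmem : rB ∈ Set.range hBgherm.eigenvalues := by
    rw [← spectrum_eq_range hBgherm]
    exact mem_spectrum_of_eigen hwne hBgw
  set SA : Finset ℝ := Finset.image hAgherm.eigenvalues Finset.univ with hSAdef
  set SB : Finset ℝ := Finset.image hBgherm.eigenvalues Finset.univ with hSBdef
  obtain ⟨τ, hτ⟩ := exists_tau SA SB
  set pA : ℝ[X] :=
    Lagrange.interpolate (SA ×ˢ SB) (fun q : ℝ × ℝ => q.1 + τ * q.2) (fun q => q.1) with hpAdef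
  set pB : ℝ[X] :=
    Lagrange.interpolate (SA ×ˢ SB) (fun q : ℝ × ℝ => q.1 + τ * q.2) (fun q => q.2) with hpBdef
  have hnode : ∀ a ∈ SA, ∀ bb ∈ SB, pA.eval (a + τ * bb) = a ∧ pB.eval (a + τ * bb) = bb := by
    intro a ha bb hb
    have hmem : (a, bb) ∈ SA ×ˢ SB := Finset.mem_product.mpr ⟨ha, hb⟩
    exact ⟨Lagrange.eval_interpolate_at_node _ hτ hmem,
      Lagrange.eval_interpolate_at_node _ hτ hmem⟩
  have hmemSA : ∀ i, hAgherm.eigenvalues i ∈ SA := fun i =>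
    Finset.mem_image_of_mem _ (Finset.mem_univ i)
  have hmemSB : ∀ j, hBgherm.eigenvalues j ∈ SB := fun j =>
    Finset.mem_image_of_mem _ (Finset.mem_univ j)
  have hPA : Polynomial.aeval (Ag + τ • Bg) pA = Ag :=
    aeval_eq_of_interp hAgherm hBgherm hABg τ pA
      (fun i j => (hnode _ (hmemSA i) _ (hmemSB j)).1)
  have hPB : Polynomial.aeval (Ag + τ • Bg) pB = Bg :=
    aeval_eq_of_interp2 hAgherm hBgherm hABg τ pB
      (fun i j => (hnode _ (hmemSA i) _ (hmemSB j)).2)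
  set Cm : Matrix (Fin n) (Fin n) ℝ := Ag + τ • Bg with hCmdef
  have hCherm : Cm.IsHermitian := isHermitian_add_smul hAgherm hBgherm τ
  have hCw : Cm *ᵥ w = (rA + τ * rB) • w := by
    rw [hCmdef, Matrix.add_mulVec, Matrix.smul_mulVec, hAgw, hBgw]
    funext i
    show rA * w i + τ * (rB * w i) = (rA + τ * rB) * w i
    ring
  obtain ⟨j₀, hj₀⟩ : (rA + τ * rB) ∈ Set.range hCherm.eigenvalues := by
    rw [← spectrum_eq_range hCherm]
    exact mem_spectrum_of_eigen hwne hCw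
  set bv : Fin n → Fin n → ℝ := fun j => ⇑(hCherm.eigenvectorBasis j) with hbvdef
  have hb : ∀ j, Cm *ᵥ bv j = hCherm.eigenvalues j • bv j := fun j =>
    hCherm.mulVec_eigenvectorBasis j
  have hortho : ∀ j k, (∑ i, bv j i * bv k i) = if j = k then 1 else 0 := by
    intro j k
    have h1 := (orthonormal_iff_ite.mp hCherm.eigenvectorBasis.orthonormal) j k
    rw [← h1]
    simp only [PiLp.inner_apply, RCLike.inner_apply, conj_trivial]
    exact Finset.sum_congr rfl fun i _ => mul_comm _ _
  set lamA' : Fin n → ℝ := fun j => pA.eval (hCherm.eigenvalues j) with hlamA'def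
  set lamB' : Fin n → ℝ := fun j => pB.eval (hCherm.eigenvalues j) with hlamB'def
  have hAb : ∀ j, Ag *ᵥ bv j = lamA' j • bv j := by
    intro j
    rw [← hPA]
    exact aeval_mulVec_eigen (hb j) pA
  have hBb : ∀ j, Bg *ᵥ bv j = lamB' j • bv j := by
    intro j
    rw [← hPB]
    exact aeval_mulVec_eigen (hb j) pB
  -- the j₀ eigenvector is ±w
  have hb0eig : Ag *ᵥ bv j₀ = rA • bv j₀ := by
    have h1 := hAb j₀
    have h2 : lamA' j₀ = rA := by
      show pA.eval (hCherm.eigenvalues j₀) = rA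
      rw [hj₀]
      obtain ⟨iA, hiA⟩ := hrAmem
      obtain ⟨iB, hiB⟩ := hrBmem
      have := (hnode rA (by rw [← hiA]; exact hmemSA iA) rB (by rw [← hiB]; exact hmemSB iB)).1
      exact this
    rw [h2] at h1
    exact h1
  obtain ⟨c0, hc0⟩ := hsimpw (bv j₀) hb0eig
  have hc0sq : c0 * c0 = 1 := by
    have h1 := hortho j₀ j₀
    rw [if_pos rfl] at h1
    have h2 : ∀ i, bv j₀ i * bv j₀ i = c0 * c0 * (w i ^ 2) := by
      intro i
      have := congrFun hc0 i
      simp only [Pi.smul_apply, smul_eq_mul] at this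
      rw [this]
      ring
    rw [Finset.sum_congr rfl fun i _ => h2 i, ← Finset.mul_sum, hwnorm2, mul_one] at h1
    exact h1
  -- building K
  set π : Equiv.Perm (Fin n) := Equiv.swap ⟨0, hn⟩ j₀ with hπdef
  set sg : Fin n → ℝ := fun j => if π j = j₀ then c0 else 1 with hsgdef
  have hsg2 : ∀ j, sg j * sg j = 1 := by
    intro j
    show (if π j = j₀ then c0 else 1) * (if π j = j₀ then c0 else 1) = 1
    split_ifs
    · exact hc0sq
    · norm_num
  set K : Matrix (Fin n) (Fin n) ℝ := Matrix.of (fun i j => sg j * bv (π j) i) with hKdef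
  have hKapp : ∀ i j, K i j = sg j * bv (π j) i := fun i j => rfl
  have hKTK : Kᵀ * K = 1 := by
    ext j k
    rw [Matrix.mul_apply]
    have h1 : ∀ i, Kᵀ j i * K i k = sg j * sg k * (bv (π j) i * bv (π k) i) := by
      intro i
      rw [Matrix.transpose_apply, hKapp, hKapp]
      ring
    rw [Finset.sum_congr rfl fun i _ => h1 i, ← Finset.mul_sum, hortho]
    by_cases hjk : j = k
    · subst hjk
      rw [if_pos rfl, Matrix.one_apply_eq, mul_one, hsg2]
    · have hne : π j ≠ π k := fun h => hjk (π.injective h)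
      rw [if_neg hne, Matrix.one_apply_ne hjk, mul_zero]
  have hKKT : K * Kᵀ = 1 := mul_eq_one_comm.mp hKTK
  have hK0 : ∀ i, K i ⟨0, hn⟩ = w i := by
    intro i
    rw [hKapp]
    have h1 : π ⟨0, hn⟩ = j₀ := Equiv.swap_apply_left _ _
    have h2 : sg ⟨0, hn⟩ = c0 := by
      show (if π ⟨0, hn⟩ = j₀ then c0 else 1) = c0
      rw [if_pos h1]
    rw [h1, h2]
    have h3 := congrFun hc0 i
    simp only [Pi.smul_apply, smul_eq_mul] at h3
    rw [h3]
    linear_combination (w i) * hc0sq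
  set lamA : Fin n → ℝ := fun j => lamA' (π j) with hlamAdef
  set lamB : Fin n → ℝ := fun j => lamB' (π j) with hlamBdef
  have hAK : ∀ j, Ag *ᵥ (fun i => K i j) = lamA j • (fun i => K i j) := by
    intro j
    have h1 : (fun i => K i j) = sg j • bv (π j) := by
      funext i
      rw [hKapp]
      rfl
    rw [h1, Matrix.mulVec_smul, hAb (π j), smul_comm]
  have hBK : ∀ j, Bg *ᵥ (fun i => K i j) = lamB j • (fun i => K i j) := by
    intro j
    have h1 : (fun i => K i j) = sg j • bv (π j) := by
      funext i
      rw [hKapp]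
      rfl
    rw [h1, Matrix.mulVec_smul, hBb (π j), smul_comm]
  have hcolne : ∀ j, (fun i => K i j) ≠ 0 := by
    intro j h
    have h1 := hortho (π j) (π j)
    rw [if_pos rfl] at h1
    have h2 : ∀ i, bv (π j) i = 0 := by
      intro i
      have h3 := congrFun h i
      rw [hKapp] at h3
      have h4 := hsg2 j
      rcases mul_eq_zero.mp h3 with h5 | h5
      · rw [h5] at h4; simp at h4
      · exact h5
    rw [Finset.sum_congr rfl fun i _ => by rw [h2 i, mul_zero]] at h1
    simp at h1
  -- diagonalization of Ag and Bg
  have hAgK : Ag * K = K * Matrix.diagonal lamA := by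
    ext i j
    have h1 := congrFun (hAK j) i
    simp only [Pi.smul_apply, smul_eq_mul] at h1
    have h2 : (Ag *ᵥ fun k => K k j) i = ∑ k, Ag i k * K k j := by
      simp [Matrix.mulVec, dotProduct]
    rw [h2] at h1
    rw [Matrix.mul_apply, Matrix.mul_diagonal, h1, mul_comm]
  have hBgK : Bg * K = K * Matrix.diagonal lamB := by
    ext i j
    have h1 := congrFun (hBK j) i
    simp only [Pi.smul_apply, smul_eq_mul] at h1
    have h2 : (Bg *ᵥ fun k => K k j) i = ∑ k, Bg i k * K k j := by
      simp [Matrix.mulVec, dotProduct]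
    rw [h2] at h1
    rw [Matrix.mul_apply, Matrix.mul_diagonal, h1, mul_comm]
  have hAgKD : Ag = K * Matrix.diagonal lamA * Kᵀ := by
    calc Ag = Ag * (K * Kᵀ) := by rw [hKKT, Matrix.mul_one]
      _ = (Ag * K) * Kᵀ := by rw [Matrix.mul_assoc]
      _ = K * Matrix.diagonal lamA * Kᵀ := by rw [hAgK]
  have hBgKD : Bg = K * Matrix.diagonal lamB * Kᵀ := by
    calc Bg = Bg * (K * Kᵀ) := by rw [hKKT, Matrix.mul_one]
      _ = (Bg * K) * Kᵀ := by rw [Matrix.mul_assoc]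
      _ = K * Matrix.diagonal lamB * Kᵀ := by rw [hBgK]
  -- spectra membership
  have hlamAspec : ∀ j, lamA j ∈ spectrum ℝ A := by
    intro j
    rw [← dconj_spectrum hg A]
    exact mem_spectrum_of_eigen (hcolne j) (hAK j)
  have hlamBspec : ∀ j, lamB j ∈ spectrum ℝ B := by
    intro j
    rw [← dconj_spectrum hg B]
    exact mem_spectrum_of_eigen (hcolne j) (hBK j)
  -- the two decompositions
  have hginv : (fun i => Real.sqrt (u i) / Real.sqrt (v i)) = fun i => (g i)⁻¹ := by
    funext i
    show Real.sqrt (u i) / Real.sqrt (v i) = (Real.sqrt (v i) / Real.sqrt (u i))⁻¹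
    rw [inv_div]
  have hdec : ∀ M : Matrix (Fin n) (Fin n) ℝ,
      M = Matrix.diagonal g * dconj M g * Matrix.diagonal (fun i => (g i)⁻¹) := by
    intro M
    ext i j
    rw [Matrix.mul_diagonal, Matrix.diagonal_mul, dconj_apply]
    have hgi : g i * (g i)⁻¹ = 1 := mul_inv_cancel₀ (ne_of_gt (hg i))
    have hgj : g j * (g j)⁻¹ = 1 := mul_inv_cancel₀ (ne_of_gt (hg j))
    linear_combination (- M i j * g j * (g j)⁻¹) * hgi - (M i j) * hgj
  have hAfin : A = Matrix.diagonal (fun i => Real.sqrt (v i) / Real.sqrt (u i)) * K *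
      Matrix.diagonal lamA * Kᵀ *
      Matrix.diagonal (fun i => Real.sqrt (u i) / Real.sqrt (v i)) := by
    rw [hginv]
    calc A = Matrix.diagonal g * Ag * Matrix.diagonal (fun i => (g i)⁻¹) := hdec A
      _ = Matrix.diagonal g * (K * Matrix.diagonal lamA * Kᵀ) *
            Matrix.diagonal (fun i => (g i)⁻¹) := by rw [← hAgKD]
      _ = Matrix.diagonal g * K * Matrix.diagonal lamA * Kᵀ *
            Matrix.diagonal (fun i => (g i)⁻¹) := by simp only [Matrix.mul_assoc]
  have hBfin : B = Matrix.diagonal (fun i => Real.sqrt (v i) / Real.sqrt (u i)) * K *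
      Matrix.diagonal lamB * Kᵀ *
      Matrix.diagonal (fun i => Real.sqrt (u i) / Real.sqrt (v i)) := by
    rw [hginv]
    calc B = Matrix.diagonal g * Bg * Matrix.diagonal (fun i => (g i)⁻¹) := hdec B
      _ = Matrix.diagonal g * (K * Matrix.diagonal lamB * Kᵀ) *
            Matrix.diagonal (fun i => (g i)⁻¹) := by rw [← hBgKD]
      _ = Matrix.diagonal g * K * Matrix.diagonal lamB * Kᵀ *
            Matrix.diagonal (fun i => (g i)⁻¹) := by simp only [Matrix.mul_assoc]
  exact ⟨u, v, K, lamA, lamB, hupos, hvpos, huv, hvsum, hAv, huA, hBv, huB,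
    hKTK, hKKT, hK0, hlamAspec, hlamBspec, hAfin, hBfin⟩
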